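/- The number of perfect matchings of [2n] with no alignments is n!. -/

import Mathlib

/-- A perfect matching of `[2n]`, encoded as a fixed-point-free involution. -/
def IsMatching {m : ℕ} (f : Equiv.Perm (Fin m)) : Prop :=
  ∀ i, f (f i) = i ∧ f i ≠ i

/-- No alignments: there are no two arcs `(i, f i)`, `(j, f j)` with
`i < f i < j < f j`. -/
def NoAlignment {m : ℕ} (f : Equiv.Perm (Fin m)) : Prop :=
  ¬ ∃ i j : Fin m, i < f i ∧ j < f j ∧ f i < j

namespace CardNA

variable {n : ℕ}

lemma card_filter_lt (n : ℕ) :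
    (Finset.filter (fun x : Fin (2*n) => (x:ℕ) < n) Finset.univ).card = n := by
  have h : (Finset.filter (fun x : Fin (2*n) => (x:ℕ) < n) Finset.univ) =
      Finset.map ⟨fun i : Fin n => Fin.castLE (by omega) i, fun a b hab => by
        simpa [Fin.ext_iff] using hab⟩ Finset.univ := by
    ext x
    simp only [Finset.mem_filter, Finset.mem_univ, true_and, Finset.mem_map,
      Function.Embedding.coeFn_mk]
    constructor
    · intro hx
      exact ⟨⟨(x : ℕ), hx⟩, by simp [Fin.ext_iff]; rfl⟩
    · rintro ⟨a, rfl⟩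
      exact a.isLt
  rw [h, Finset.card_map, Finset.card_univ, Fintype.card_fin]

lemma card_filter_le (n : ℕ) :
    (Finset.filter (fun x : Fin (2*n) => n ≤ (x:ℕ)) Finset.univ).card = n := by
  have h1 := Finset.card_filter_add_card_filter_not
    (s := (Finset.univ : Finset (Fin (2*n)))) (p := fun x : Fin (2*n) => (x:ℕ) < n)
  have h2 : (Finset.filter (fun x : Fin (2*n) => ¬ (x:ℕ) < n) Finset.univ) =
      (Finset.filter (fun x : Fin (2*n) => n ≤ (x:ℕ)) Finset.univ) := by
    apply Finset.filter_congr
    intro x _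
    simp [not_lt]
  rw [card_filter_lt, h2, Finset.card_univ, Fintype.card_fin] at h1
  omega

/-- If `f` maps the right half into the left half, then it maps the left half
into the right half (cardinality argument). -/
lemma swap_halves (f : Equiv.Perm (Fin (2*n)))
    (hm : IsMatching f)
    (h : ∀ x : Fin (2*n), n ≤ (x:ℕ) → (f x : ℕ) < n) :
    ∀ i : Fin (2*n), (i:ℕ) < n → n ≤ (f i : ℕ) := by
  intro i hi
  set S := Finset.filter (fun x : Fin (2*n) => n ≤ (x:ℕ)) Finset.univ with hS
  have hsub : S.image f ⊆ Finset.filter (fun x : Fin (2*n) => (x:ℕ) < n) Finset.univ := by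
    intro x hx
    simp only [Finset.mem_image, hS, Finset.mem_filter, Finset.mem_univ, true_and] at hx ⊢
    obtain ⟨s, hs, rfl⟩ := hx
    exact h s hs
  have hcard : (S.image f).card = n := by
    rw [Finset.card_image_of_injective _ f.injective, hS, card_filter_le]
  have heq : S.image f = Finset.filter (fun x : Fin (2*n) => (x:ℕ) < n) Finset.univ :=
    Finset.eq_of_subset_of_card_le hsub (by rw [hcard, card_filter_lt])
  have hi' : i ∈ S.image f := by
    rw [heq]
    simp [hi]
  simp only [Finset.mem_image, hS, Finset.mem_filter, Finset.mem_univ, true_and] at hi'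
  obtain ⟨s, hs, hfs⟩ := hi'
  have : f i = s := by rw [← hfs]; exact (hm s).1
  rw [this]
  exact hs

/-- In a matching with no alignment, the left half maps into the right half. -/
lemma left_half (f : Equiv.Perm (Fin (2*n))) (hm : IsMatching f)
    (hna : NoAlignment f) : ∀ i : Fin (2*n), (i:ℕ) < n → n ≤ (f i : ℕ) := by
  by_contra hcon
  push_neg at hcon
  obtain ⟨i, hi, hfi⟩ := hcon
  -- there is c with n ≤ c and n ≤ f c
  have hc : ∃ c : Fin (2*n), n ≤ (c:ℕ) ∧ n ≤ (f c : ℕ) := by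
    by_contra hc
    push_neg at hc
    exact absurd (swap_halves f hm hc i hi) (by omega)
  obtain ⟨c, hcn, hfc⟩ := hc
  -- build an arc inside the left half
  have hine : f i ≠ i := (hm i).2
  obtain ⟨a, ha, hafa⟩ : ∃ a : Fin (2*n), a < f a ∧ (f a : ℕ) < n := by
    rcases lt_or_gt_of_ne hine with h | h
    · exact ⟨f i, by rw [(hm i).1]; exact h, by rw [(hm i).1]; exact hi⟩
    · exact ⟨i, h, hfi⟩
  -- build an arc inside the right half
  have hcne : f c ≠ c := (hm c).2
  obtain ⟨b, hb, hnb⟩ : ∃ b : Fin (2*n), b < f b ∧ n ≤ (b:ℕ) := by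
    rcases lt_or_gt_of_ne hcne with h | h
    · exact ⟨f c, by rw [(hm c).1]; exact h, hfc⟩
    · exact ⟨c, h, hcn⟩
  exact hna ⟨a, b, ha, hb, by rw [Fin.lt_def]; omega⟩

/-- In a matching whose left half maps into the right half, the right half maps
into the left half. -/
lemma right_half (f : Equiv.Perm (Fin (2*n))) (hm : IsMatching f)
    (h1 : ∀ i : Fin (2*n), (i:ℕ) < n → n ≤ (f i : ℕ)) :
    ∀ i : Fin (2*n), n ≤ (i:ℕ) → (f i : ℕ) < n := by
  intro i hi
  set S := Finset.filter (fun x : Fin (2*n) => (x:ℕ) < n) Finset.univ with hS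
  have hsub : S.image f ⊆ Finset.filter (fun x : Fin (2*n) => n ≤ (x:ℕ)) Finset.univ := by
    intro x hx
    simp only [Finset.mem_image, hS, Finset.mem_filter, Finset.mem_univ, true_and] at hx ⊢
    obtain ⟨s, hs, rfl⟩ := hx
    exact h1 s hs
  have hcard : (S.image f).card = n := by
    rw [Finset.card_image_of_injective _ f.injective, hS, card_filter_lt]
  have heq : S.image f = Finset.filter (fun x : Fin (2*n) => n ≤ (x:ℕ)) Finset.univ :=
    Finset.eq_of_subset_of_card_le hsub (by rw [hcard, card_filter_le])
  have hi' : i ∈ S.image f := by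
    rw [heq]
    simp [hi]
  simp only [Finset.mem_image, hS, Finset.mem_filter, Finset.mem_univ, true_and] at hi'
  obtain ⟨s, hs, hfs⟩ := hi'
  have : f i = s := by rw [← hfs]; exact (hm s).1
  rw [this]
  exact hs

/-- The underlying function of the matching associated to a permutation. -/
def F (σ : Equiv.Perm (Fin n)) (i : Fin (2*n)) : Fin (2*n) :=
  if h : (i:ℕ) < n then
    ⟨n + (σ ⟨i, h⟩ : ℕ), by have := (σ ⟨i, h⟩).isLt; omega⟩
  else
    Fin.castLE (by omega) (σ⁻¹ ⟨(i:ℕ) - n, by have := i.isLt; omega⟩)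

lemma F_invol (σ : Equiv.Perm (Fin n)) : Function.Involutive (F σ) := by
  intro i
  by_cases h : (i:ℕ) < n
  · have h1 : F σ i = ⟨n + (σ ⟨i, h⟩ : ℕ), by have := (σ ⟨i, h⟩).isLt; omega⟩ := dif_pos h
    rw [h1]
    have h2 : ¬ (n + (σ ⟨i, h⟩ : ℕ) < n) := by omega
    rw [F, dif_neg h2]
    have h3 : (⟨n + (σ ⟨i, h⟩ : ℕ) - n, by have := i.isLt; omega⟩ : Fin n) = σ ⟨i, h⟩ := by
      simp [Fin.ext_iff]
    rw [h3]
    simp [Fin.ext_iff]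
  · have h1 : F σ i = Fin.castLE (by omega)
        (σ⁻¹ ⟨(i:ℕ) - n, by have := i.isLt; omega⟩) := dif_neg h
    rw [h1]
    have h2 : ((Fin.castLE (by omega : n ≤ 2*n)
        (σ⁻¹ ⟨(i:ℕ) - n, by have := i.isLt; omega⟩) : Fin (2*n)) : ℕ) < n :=
      (σ⁻¹ ⟨(i:ℕ) - n, by have := i.isLt; omega⟩).isLt
    rw [F, dif_pos h2]
    have h3 : (⟨((Fin.castLE (by omega : n ≤ 2*n)
        (σ⁻¹ ⟨(i:ℕ) - n, by have := i.isLt; omega⟩) : Fin (2*n)) : ℕ), h2⟩ : Fin n) =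
        σ⁻¹ ⟨(i:ℕ) - n, by have := i.isLt; omega⟩ := by
      simp [Fin.ext_iff]
    simp only [Fin.ext_iff]
    rw [h3]
    simp only [Equiv.apply_symm_apply, Equiv.Perm.coe_inv]
    have := i.isLt
    omega

/-- The matching associated to a permutation. -/
def Fperm (σ : Equiv.Perm (Fin n)) : Equiv.Perm (Fin (2*n)) :=
  (F_invol σ).toPerm

lemma Fperm_apply (σ : Equiv.Perm (Fin n)) (i : Fin (2*n)) : Fperm σ i = F σ i := rfl

lemma Fperm_lt (σ : Equiv.Perm (Fin n)) (i : Fin (2*n)) (h : (i:ℕ) < n) :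
    (Fperm σ i : ℕ) = n + (σ ⟨i, h⟩ : ℕ) := by
  rw [Fperm_apply, F, dif_pos h]

lemma Fperm_ge (σ : Equiv.Perm (Fin n)) (i : Fin (2*n)) (h : ¬ (i:ℕ) < n) :
    (Fperm σ i : ℕ) = (σ⁻¹ ⟨(i:ℕ) - n, by have := i.isLt; omega⟩ : ℕ) := by
  rw [Fperm_apply, F, dif_neg h]
  rfl

lemma Fperm_matching (σ : Equiv.Perm (Fin n)) : IsMatching (Fperm σ) := by
  intro i
  refine ⟨F_invol σ i, ?_⟩
  intro hcon
  by_cases h : (i:ℕ) < n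
  · have := Fperm_lt σ i h
    rw [hcon] at this
    omega
  · have := Fperm_ge σ i h
    rw [hcon] at this
    have h2 := (σ⁻¹ (⟨(i:ℕ) - n, by have := i.isLt; omega⟩ : Fin n)).isLt
    omega

lemma Fperm_noAlignment (σ : Equiv.Perm (Fin n)) : NoAlignment (Fperm σ) := by
  rintro ⟨i, j, hi, hj, hij⟩
  have key : ∀ k : Fin (2*n), k < Fperm σ k → (k:ℕ) < n ∧ n ≤ (Fperm σ k : ℕ) := by
    intro k hk
    by_cases h : (k:ℕ) < n
    · have := Fperm_lt σ k h
      exact ⟨h, by omega⟩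
    · have h1 := Fperm_ge σ k h
      have h2 := (σ⁻¹ (⟨(k:ℕ) - n, by have := k.isLt; omega⟩ : Fin n)).isLt
      rw [Fin.lt_def] at hk
      omega
  obtain ⟨hi1, hi2⟩ := key i hi
  obtain ⟨hj1, hj2⟩ := key j hj
  rw [Fin.lt_def] at hij
  omega

/-- The permutation of `Fin n` associated to a no-alignment matching. -/
noncomputable def toPermN (f : Equiv.Perm (Fin (2*n))) (hm : IsMatching f)
    (hna : NoAlignment f) : Equiv.Perm (Fin n) := by
  have h1 := left_half f hm hna
  refine Equiv.ofBijective
    (fun k : Fin n => (⟨(f ⟨(k:ℕ), by omega⟩ : ℕ) - n, by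
      have := (f ⟨(k:ℕ), by omega⟩).isLt
      have := h1 ⟨(k:ℕ), by omega⟩ k.isLt
      omega⟩ : Fin n)) ?_
  rw [Fintype.bijective_iff_injective_and_card]
  refine ⟨?_, rfl⟩
  intro a b hab
  simp only [Fin.mk.injEq] at hab
  have ha := h1 ⟨(a:ℕ), by omega⟩ a.isLt
  have hb := h1 ⟨(b:ℕ), by omega⟩ b.isLt
  have : f ⟨(a:ℕ), by omega⟩ = f ⟨(b:ℕ), by omega⟩ := by
    rw [Fin.ext_iff]
    omega
  have := f.injective this
  rw [Fin.ext_iff] at this ⊢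
  exact this

lemma toPermN_apply (f : Equiv.Perm (Fin (2*n))) (hm : IsMatching f)
    (hna : NoAlignment f) (k : Fin n) :
    (toPermN f hm hna k : ℕ) = (f ⟨(k:ℕ), by omega⟩ : ℕ) - n := by
  rfl

/-- The bijection between no-alignment matchings of `[2n]` and permutations of `[n]`. -/
noncomputable def matchEquiv (n : ℕ) :
    {f : Equiv.Perm (Fin (2*n)) // IsMatching f ∧ NoAlignment f} ≃ Equiv.Perm (Fin n) where
  toFun p := toPermN p.1 p.2.1 p.2.2
  invFun σ := ⟨Fperm σ, Fperm_matching σ, Fperm_noAlignment σ⟩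
  left_inv := by
    rintro ⟨f, hm, hna⟩
    ext i
    simp only
    have h1 := left_half f hm hna
    have h2 := right_half f hm h1
    set σ := toPermN f hm hna with hσ
    by_cases h : (i:ℕ) < n
    · rw [Fperm_lt σ i h]
      have h3 : (σ ⟨(i:ℕ), h⟩ : ℕ) = (f ⟨((⟨(i:ℕ), h⟩ : Fin n) : ℕ), by omega⟩ : ℕ) - n :=
        toPermN_apply f hm hna _
      have h4 : (⟨((⟨(i:ℕ), h⟩ : Fin n) : ℕ), by omega⟩ : Fin (2*n)) = i := by
        simp [Fin.ext_iff]
      rw [h4] at h3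
      have := h1 i h
      omega
    · rw [Fperm_ge σ i h]
      -- show σ⁻¹ ⟨i - n⟩ = ⟨f i⟩
      have hfi : (f i : ℕ) < n := h2 i (by omega)
      have key : σ (⟨(f i : ℕ), hfi⟩ : Fin n) = ⟨(i:ℕ) - n, by have := i.isLt; omega⟩ := by
        rw [Fin.ext_iff]
        have h3 : (σ ⟨(f i : ℕ), hfi⟩ : ℕ) =
            (f ⟨((⟨(f i : ℕ), hfi⟩ : Fin n) : ℕ), by omega⟩ : ℕ) - n :=
          toPermN_apply f hm hna _
        have h4 : (⟨((⟨(f i : ℕ), hfi⟩ : Fin n) : ℕ), by omega⟩ : Fin (2*n)) = f i := by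
          simp [Fin.ext_iff]
        rw [h4, (hm i).1] at h3
        simpa using h3
      have : σ⁻¹ (⟨(i:ℕ) - n, by have := i.isLt; omega⟩ : Fin n) = ⟨(f i : ℕ), hfi⟩ := by
        rw [← key]
        exact σ.symm_apply_apply _
      rw [this]
  right_inv := by
    intro σ
    ext k
    have h3 : (toPermN (Fperm σ) (Fperm_matching σ) (Fperm_noAlignment σ) k : ℕ) =
        ((Fperm σ) ⟨(k:ℕ), by omega⟩ : ℕ) - n :=
      toPermN_apply _ _ _ _
    show (toPermN (Fperm σ) (Fperm_matching σ) (Fperm_noAlignment σ) k : ℕ) = (σ k : ℕ)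
    rw [h3, Fperm_lt σ ⟨(k:ℕ), by omega⟩ k.isLt]
    have h4 : (⟨((⟨(k:ℕ), by omega⟩ : Fin (2*n)) : ℕ), k.isLt⟩ : Fin n) = k := by
      simp [Fin.ext_iff]
    rw [h4]
    omega

end CardNA

/-- The number of perfect matchings of `[2n]` with no alignments is `n!`. -/
theorem card_noAlignment_matchings (n : ℕ) :
    Nat.card {f : Equiv.Perm (Fin (2 * n)) // IsMatching f ∧ NoAlignment f} =
      n.factorial := by
  rw [Nat.card_congr (CardNA.matchEquiv n), Nat.card_eq_fintype_card,
    Fintype.card_perm, Fintype.card_fin]
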